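/- For every natural number ℓ ≥ 2, the rational number ∑_{p=1}^{ℓ} (1/p) · ∑_{j=1}^{p} (-1)^j · C(p,j) · j^ℓ equals 0, while for ℓ = 1 it equals −1. -/

import Mathlib

open Finset

/-- `Bsum k m = ∑_{i=0}^{m} (-1)^i C(m,i) i^k` over ℚ. -/
private def Bsum (k m : ℕ) : ℚ :=
  ∑ i ∈ range (m + 1), (-1 : ℚ) ^ i * (m.choose i : ℚ) * (i : ℚ) ^ k

private lemma Bsum_vanish : ∀ k n : ℕ, k < n → Bsum k n = 0 := by
  intro k
  induction k using Nat.strong_induction_on with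
  | _ k ih =>
    intro n hkn
    obtain ⟨m, rfl⟩ : ∃ m, n = m + 1 := ⟨n - 1, by omega⟩
    match k, hkn with
    | 0, hkn =>
      have h := Int.alternating_sum_range_choose (n := m + 1)
      rw [if_neg (Nat.succ_ne_zero m)] at h
      have := congrArg (Int.cast : ℤ → ℚ) h
      push_cast at this
      simpa [Bsum] using this
    | t + 1, hkn =>
      have hstep : ∀ i : ℕ, ((m + 1).choose (i + 1) : ℚ) * ((i : ℚ) + 1) =
          ((m : ℚ) + 1) * (m.choose i : ℚ) := by
        intro i
        have := congrArg (Nat.cast : ℕ → ℚ) (Nat.add_one_mul_choose_eq m i)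
        push_cast at this
        linarith
      have key : Bsum (t + 1) (m + 1) =
          -((m : ℚ) + 1) * ∑ i ∈ range (m + 1),
            (-1 : ℚ) ^ i * (m.choose i : ℚ) * ((i : ℚ) + 1) ^ t := by
        rw [Bsum, Finset.sum_range_succ']
        simp only [Nat.cast_zero, ne_eq, Nat.succ_ne_zero, not_false_eq_true,
          zero_pow, mul_zero, add_zero]
        rw [Finset.mul_sum]
        refine Finset.sum_congr rfl fun i _ => ?_
        have h2 := hstep i
        push_cast
        calc (-1 : ℚ) ^ (i + 1) * ((m + 1).choose (i + 1) : ℚ) * ((i : ℚ) + 1) ^ (t + 1)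
            = (-1 : ℚ) ^ i * (-1) * (((m + 1).choose (i + 1) : ℚ) * ((i : ℚ) + 1)) *
              ((i : ℚ) + 1) ^ t := by ring
          _ = -((m : ℚ) + 1) * ((-1 : ℚ) ^ i * (m.choose i : ℚ) * ((i : ℚ) + 1) ^ t) := by
              rw [h2]; ring
      rw [key]
      have expand : ∀ i : ℕ, ((i : ℚ) + 1) ^ t =
          ∑ s ∈ range (t + 1), (i : ℚ) ^ s * (t.choose s : ℚ) := by
        intro i
        simpa using add_pow (i : ℚ) 1 t
      calc -((m : ℚ) + 1) * ∑ i ∈ range (m + 1),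
            (-1 : ℚ) ^ i * (m.choose i : ℚ) * ((i : ℚ) + 1) ^ t
          = -((m : ℚ) + 1) * ∑ i ∈ range (m + 1), ∑ s ∈ range (t + 1),
              (t.choose s : ℚ) * ((-1 : ℚ) ^ i * (m.choose i : ℚ) * (i : ℚ) ^ s) := by
            congr 1
            refine Finset.sum_congr rfl fun i _ => ?_
            rw [expand, Finset.mul_sum]
            exact Finset.sum_congr rfl fun s _ => by ring
        _ = -((m : ℚ) + 1) * ∑ s ∈ range (t + 1), (t.choose s : ℚ) * Bsum s m := by
            rw [Finset.sum_comm]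
            congr 1
            exact Finset.sum_congr rfl fun s _ => by rw [Bsum, Finset.mul_sum]
        _ = 0 := by
            have hz : ∀ s ∈ range (t + 1), (t.choose s : ℚ) * Bsum s m = 0 := by
              intro s hs
              simp only [Finset.mem_range] at hs
              rw [ih s (by omega) m (by omega), mul_zero]
            rw [Finset.sum_congr rfl hz]
            simp

/-- Telescoping step: `∑_{i=0}^m (-1)^i C(m,i) (i+1)^k = Bsum k m - Bsum k (m+1)`. -/
private lemma Bsum_step (k m : ℕ) :
    ∑ i ∈ range (m + 1), (-1 : ℚ) ^ i * (m.choose i : ℚ) * ((i : ℚ) + 1) ^ k =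
      Bsum k m - Bsum k (m + 1) := by
  have h1 : Bsum k (m + 1) = (0 : ℚ) ^ k +
      ∑ i ∈ range (m + 1), (-1 : ℚ) ^ (i + 1) *
        ((m.choose i : ℚ) + (m.choose (i + 1) : ℚ)) * ((i : ℚ) + 1) ^ k := by
    rw [Bsum, Finset.sum_range_succ']
    simp only [Nat.cast_zero, pow_zero, one_mul, Nat.choose_zero_right, Nat.cast_one]
    rw [add_comm]
    congr 1
    refine Finset.sum_congr rfl fun i _ => ?_
    rw [Nat.choose_succ_succ]
    push_cast
    ring
  have h2 : ∑ i ∈ range (m + 1), (-1 : ℚ) ^ (i + 1) * (m.choose (i + 1) : ℚ) *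
      ((i : ℚ) + 1) ^ k = Bsum k m - (0 : ℚ) ^ k := by
    have e : Bsum k m = (0 : ℚ) ^ k +
        ∑ i ∈ range m, (-1 : ℚ) ^ (i + 1) * (m.choose (i + 1) : ℚ) * ((i : ℚ) + 1) ^ k := by
      rw [Bsum, Finset.sum_range_succ', add_comm]
      congr 1
      · simp
      · exact Finset.sum_congr rfl fun i _ => by push_cast; ring
    rw [Finset.sum_range_succ, Nat.choose_succ_self, e]
    push_cast
    ring
  have h3 : ∑ i ∈ range (m + 1), (-1 : ℚ) ^ (i + 1) *
      ((m.choose i : ℚ) + (m.choose (i + 1) : ℚ)) * ((i : ℚ) + 1) ^ k =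
      (- ∑ i ∈ range (m + 1), (-1 : ℚ) ^ i * (m.choose i : ℚ) * ((i : ℚ) + 1) ^ k) +
      ∑ i ∈ range (m + 1), (-1 : ℚ) ^ (i + 1) * (m.choose (i + 1) : ℚ) *
        ((i : ℚ) + 1) ^ k := by
    rw [← Finset.sum_neg_distrib, ← Finset.sum_add_distrib]
    exact Finset.sum_congr rfl fun i _ => by ring
  rw [h3, h2] at h1
  linarith

theorem sum_inv_p_alternating_binomial (ℓ : ℕ) (hℓ : 1 ≤ ℓ) :
    ∑ p ∈ Finset.Icc 1 ℓ, (1 / (p : ℚ)) *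
        ∑ j ∈ Finset.Icc 1 p, (-1 : ℚ) ^ j * (p.choose j : ℚ) * (j : ℚ) ^ ℓ
      = if ℓ = 1 then -1 else 0 := by
  set k := ℓ - 1 with hk
  have hℓk : ℓ = k + 1 := by omega
  have houter : Finset.Icc 1 ℓ = Finset.Ico 1 (ℓ + 1) := by
    rw [Finset.Ico_add_one_right_eq_Icc]
  rw [houter, Finset.sum_Ico_eq_sum_range]
  simp only [Nat.add_sub_cancel]
  have hterm : ∀ m ∈ range ℓ, (1 / ((1 + m : ℕ) : ℚ)) *
      ∑ j ∈ Finset.Icc 1 (1 + m), (-1 : ℚ) ^ j * ((1 + m).choose j : ℚ) * (j : ℚ) ^ ℓ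
      = Bsum k (m + 1) - Bsum k m := by
    intro m _
    have hinner : Finset.Icc 1 (1 + m) = Finset.Ico 1 (1 + m + 1) := by
      rw [Finset.Ico_add_one_right_eq_Icc]
    rw [hinner, Finset.sum_Ico_eq_sum_range]
    simp only [Nat.add_sub_cancel]
    have e1 : 1 + m = m + 1 := by omega
    rw [e1]
    have hstep : ∀ i : ℕ, ((m + 1).choose (i + 1) : ℚ) * ((i : ℚ) + 1) =
        ((m : ℚ) + 1) * (m.choose i : ℚ) := by
      intro i
      have := congrArg (Nat.cast : ℕ → ℚ) (Nat.add_one_mul_choose_eq m i)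
      push_cast at this
      linarith
    have key : ∑ x ∈ range (m + 1),
        (-1 : ℚ) ^ (1 + x) * ((m + 1).choose (1 + x) : ℚ) * ((1 + x : ℕ) : ℚ) ^ ℓ
        = ∑ x ∈ range (m + 1),
            ((m : ℚ) + 1) * (-((-1 : ℚ) ^ x * (m.choose x : ℚ) * ((x : ℚ) + 1) ^ k)) := by
      refine Finset.sum_congr rfl fun x _ => ?_
      have e2 : 1 + x = x + 1 := by omega
      rw [e2]
      have h2 := hstep x
      push_cast
      calc (-1 : ℚ) ^ (x + 1) * ((m + 1).choose (x + 1) : ℚ) * ((x : ℚ) + 1) ^ ℓ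
          = (-1 : ℚ) ^ x * (-1) * (((m + 1).choose (x + 1) : ℚ) * ((x : ℚ) + 1)) *
            ((x : ℚ) + 1) ^ k := by rw [hℓk]; ring
        _ = ((m : ℚ) + 1) * (-((-1 : ℚ) ^ x * (m.choose x : ℚ) * ((x : ℚ) + 1) ^ k)) := by
            rw [h2]; ring
    rw [key, ← Finset.mul_sum, Finset.sum_neg_distrib, Bsum_step]
    have hm1 : ((m : ℚ) + 1) ≠ 0 := by positivity
    push_cast
    field_simp
    ring
  rw [Finset.sum_congr rfl hterm, Finset.sum_range_sub (fun m => Bsum k m) ℓ]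
  rw [Bsum_vanish k ℓ (by omega)]
  have hB0 : Bsum k 0 = (0 : ℚ) ^ k := by simp [Bsum]
  rw [hB0]
  rcases Nat.eq_or_lt_of_le hℓ with h1 | h1
  · rw [if_pos h1.symm]
    have hk0 : k = 0 := by omega
    simp [hk0]
  · rw [if_neg (by omega)]
    have hk0 : k ≠ 0 := by omega
    simp [zero_pow hk0]
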